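/- (Pellet's theorem, matrix version, spectral norm.) Let P(z) = Iz^n + A_{n−1}z^{n−1} + … + A_1 z + A_0 with n ≥ 2, A_j ∈ ℂ^{m×m} for j = 0,…,n−1, and A_0 ≠ 0, and let ‖·‖ denote the spectral norm. Suppose A_k is invertible for some k with 1 ≤ k ≤ n−1, and the real polynomial f(x) = x^n + ‖A_{n−1}‖ x^{n−1} + … + ‖A_{k+1}‖ x^{k+1} − ‖A_k^{−1}‖^{−1} x^k + ‖A_{k−1}‖ x^{k−1} + … + ‖A_1‖ x + ‖A_0‖ has two distinct positive roots x1 < x2. Then, counting multiplicity, the polynomial det(P(z)) (of degree nm in z) has exactly km zeros z with |z| ≤ x1, and it has no zero z with x1 < |z| < x2. -/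

import Mathlib

set_option maxHeartbeats 4000000
set_option synthInstance.maxHeartbeats 1000000
set_option maxRecDepth 10000

open Polynomial

open Classical in
/-- Number of roots (counted with multiplicity) of `p` satisfying predicate `P`. -/
noncomputable def rcount (p : Polynomial ℂ) (P : ℂ → Prop) : ℕ :=
  Multiset.card (p.roots.filter P)

/-- The spectral norm (operator norm induced by the Euclidean norm) of a complex matrix. -/
noncomputable def specNorm {d : ℕ} (M : Matrix (Fin d) (Fin d) ℂ) : ℝ :=
  ‖Matrix.toEuclideanCLM (𝕜 := ℂ) M‖

open Metric

lemma specNorm_nonneg {d : ℕ} (M : Matrix (Fin d) (Fin d) ℂ) : 0 ≤ specNorm M := norm_nonneg _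

lemma specNorm_mul_le {d : ℕ} (M N : Matrix (Fin d) (Fin d) ℂ) :
    specNorm (M * N) ≤ specNorm M * specNorm N := by
  rw [specNorm, specNorm, specNorm, map_mul]; exact norm_mul_le _ _

lemma specNorm_smul {d : ℕ} (c : ℂ) (M : Matrix (Fin d) (Fin d) ℂ) :
    specNorm (c • M) = ‖c‖ * specNorm M := by
  rw [specNorm, specNorm, map_smul]
  rw [norm_smul c (Matrix.toEuclideanCLM (𝕜 := ℂ) M)]

lemma specNorm_one_le {d : ℕ} : specNorm (1 : Matrix (Fin d) (Fin d) ℂ) ≤ 1 := by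
  rw [specNorm, map_one]; exact ContinuousLinearMap.norm_id_le

lemma specNorm_eq_zero {d : ℕ} {M : Matrix (Fin d) (Fin d) ℂ} (h : specNorm M = 0) : M = 0 := by
  rw [specNorm, norm_eq_zero] at h
  have := congrArg (Matrix.toEuclideanCLM (𝕜 := ℂ)).symm h
  simpa using this

lemma isUnit_one_add_of_specNorm_lt {d : ℕ} {B : Matrix (Fin d) (Fin d) ℂ}
    (h : specNorm B < 1) : IsUnit (1 + B) := by
  have h1 : IsUnit (1 + Matrix.toEuclideanCLM (𝕜 := ℂ) B) := by
    have := (Units.oneSub (-(Matrix.toEuclideanCLM (𝕜 := ℂ) B)) (by simpa [specNorm] using h)).isUnit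
    simpa [sub_neg_eq_add] using this
  have h2 := h1.map (Matrix.toEuclideanCLM (𝕜 := ℂ)).symm
  simpa using h2
lemma convexOn_exp_mul (m : ℝ) : ConvexOn ℝ Set.univ (fun y => Real.exp (m * y)) := by
  refine ⟨convex_univ, ?_⟩
  intro x _ y _ a b ha hb hab
  have h := convexOn_exp.2 (Set.mem_univ (m*x)) (Set.mem_univ (m*y)) ha hb hab
  have e : m * (a * x + b * y) = a * (m*x) + b * (m*y) := by ring
  simp only [smul_eq_mul]
  rw [e]; exact h

lemma strictConvexOn_exp_mul {m : ℝ} (hm : m ≠ 0) :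
    StrictConvexOn ℝ Set.univ (fun y => Real.exp (m * y)) := by
  refine ⟨convex_univ, ?_⟩
  intro x _ y _ hxy a b ha hb hab
  have h := strictConvexOn_exp.2 (Set.mem_univ (m*x)) (Set.mem_univ (m*y))
    (fun hc => hxy (mul_left_cancel₀ hm hc)) ha hb hab
  have e : m * (a * x + b * y) = a * (m*x) + b * (m*y) := by ring
  simp only [smul_eq_mul]
  rw [e]; exact h

lemma convexOn_finset_sum {ι : Type*} {s : Finset ι} {f : ι → ℝ → ℝ}
    (h : ∀ i ∈ s, ConvexOn ℝ Set.univ (f i)) :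
    ConvexOn ℝ Set.univ (fun y => ∑ i ∈ s, f i y) := by
  classical
  induction s using Finset.induction_on with
  | empty => simpa using convexOn_const (0:ℝ) convex_univ
  | insert a s' hni ih =>
    simp only [Finset.sum_insert hni]
    exact (h a (Finset.mem_insert_self _ _)).add
      (ih (fun i hi => h i (Finset.mem_insert_of_mem hi)))

lemma strictconvex_neg_between {g : ℝ → ℝ} (hg : StrictConvexOn ℝ Set.univ g)
    {y1 y2 y : ℝ} (h1 : g y1 = 0) (h2 : g y2 = 0) (hy1 : y1 < y) (hy2 : y < y2) :
    g y < 0 := by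
  have hden : 0 < y2 - y1 := by linarith
  have hab : ((y2-y)/(y2-y1)) + ((y-y1)/(y2-y1)) = 1 := by
    rw [← add_div, div_eq_one_iff_eq hden.ne']; ring
  have h := hg.2 (Set.mem_univ y1) (Set.mem_univ y2) (by linarith : y1 ≠ y2)
    (div_pos (by linarith) hden) (div_pos (by linarith) hden) hab
  have e : ((y2-y)/(y2-y1)) • y1 + ((y-y1)/(y2-y1)) • y2 = y := by
    rw [smul_eq_mul, smul_eq_mul, div_mul_eq_mul_div, div_mul_eq_mul_div, ← add_div,
      div_eq_iff hden.ne']; ring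
  rw [e, h1, h2] at h
  simpa using h

lemma fneg (n k : ℕ) (hkn : k + 1 ≤ n) (c : ℝ) (w : ℕ → ℝ) (hw : ∀ j, 0 ≤ w j)
    (x1 x2 : ℝ) (h1 : 0 < x1) (h12 : x1 < x2)
    (hfx1 : x1^n - c*x1^k + ∑ j ∈ (Finset.range n).erase k, w j * x1^j = 0)
    (hfx2 : x2^n - c*x2^k + ∑ j ∈ (Finset.range n).erase k, w j * x2^j = 0)
    {x : ℝ} (hx1 : x1 < x) (hx2 : x < x2) :
    x^n - c*x^k + ∑ j ∈ (Finset.range n).erase k, w j * x^j < 0 := by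
  set g : ℝ → ℝ := fun y => Real.exp (((n:ℝ) - k) * y) +
    (-c + ∑ j ∈ (Finset.range n).erase k, w j * Real.exp (((j:ℝ) - k) * y)) with hgdef
  have key : ∀ t : ℝ, 0 < t →
      t^n - c*t^k + ∑ j ∈ (Finset.range n).erase k, w j * t^j = t^k * g (Real.log t) := by
    intro t ht
    have hpow : ∀ j : ℕ, t^k * Real.exp (((j:ℝ) - k) * Real.log t) = t^j := by
      intro j
      rw [sub_mul, Real.exp_sub, Real.exp_nat_mul, Real.exp_nat_mul, Real.exp_log ht]
      have hk0 : t^k ≠ 0 := by positivity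
      field_simp
    rw [hgdef]
    simp only [mul_add, Finset.mul_sum]
    rw [hpow n]
    have : ∀ j ∈ (Finset.range n).erase k,
        t ^ k * (w j * Real.exp (((j:ℝ) - k) * Real.log t)) = w j * t ^ j := by
      intro j _
      rw [← hpow j]; ring
    rw [Finset.sum_congr rfl this]
    ring
  have hm : ((n:ℝ) - k) ≠ 0 := by
    have : (k:ℝ) + 1 ≤ n := by exact_mod_cast hkn
    linarith
  have hconv : StrictConvexOn ℝ Set.univ g := by
    refine (strictConvexOn_exp_mul hm).add_convexOn ?_
    have hsum : ConvexOn ℝ Set.univ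
        (fun y => ∑ j ∈ (Finset.range n).erase k, w j * Real.exp (((j:ℝ) - k) * y)) := by
      apply convexOn_finset_sum
      intro j _
      simpa using (convexOn_exp_mul ((j:ℝ) - k)).smul (hw j)
    exact (convexOn_const (-c) convex_univ).add hsum
  have h2' : 0 < x2 := lt_trans h1 h12
  have hx : 0 < x := lt_trans h1 hx1
  have g1 : g (Real.log x1) = 0 := by
    have := key x1 h1
    rw [hfx1] at this
    have hk : x1^k ≠ 0 := by positivity
    field_simp at this
    exact (mul_eq_zero.mp this.symm).resolve_left hk
  have g2 : g (Real.log x2) = 0 := by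
    have := key x2 h2'
    rw [hfx2] at this
    have hk : x2^k ≠ 0 := by positivity
    field_simp at this
    exact (mul_eq_zero.mp this.symm).resolve_left hk
  have hglt : g (Real.log x) < 0 :=
    strictconvex_neg_between hconv g1 g2
      (Real.log_lt_log h1 hx1) (Real.log_lt_log hx hx2)
  rw [key x hx]
  exact mul_neg_of_pos_of_neg (by positivity) hglt

lemma eval_prodXsub (z : ℂ) (s : Multiset ℂ) :
    eval z ((s.map (fun ρ => X - C ρ)).prod) = (s.map (fun ρ => z - ρ)).prod := by
  rw [eval_multiset_prod, Multiset.map_map]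
  congr 1
  apply Multiset.map_congr rfl
  intro ρ _
  simp

lemma my_circle_add {f g : ℂ → ℂ} {c : ℂ} {R : ℝ} (hf : CircleIntegrable f c R)
    (hg : CircleIntegrable g c R) :
    (∮ z in C(c, R), f z + g z) = (∮ z in C(c, R), f z) + ∮ z in C(c, R), g z := by
  simp only [circleIntegral, smul_add, intervalIntegral.integral_add hf.out hg.out]

lemma circle_count (Rr : ℝ) (hR : 0 < Rr) (a : ℂ) (ha : a ≠ 0) (s : Multiset ℂ)
    (hs : ∀ ρ ∈ s, ‖ρ‖ ≠ Rr) :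
    (∮ z in C(0, Rr), eval z (derivative (C a * (s.map (fun ρ => X - C ρ)).prod))
        / eval z (C a * (s.map (fun ρ => X - C ρ)).prod))
      = 2 * Real.pi * Complex.I *
          (Multiset.card (s.filter (fun ρ => ‖ρ‖ < Rr)) : ℂ) := by
  classical
  induction s using Multiset.induction_on with
  | empty => simp [circleIntegral]
  | cons ρ s ih =>
    have hρ : ‖ρ‖ ≠ Rr := hs ρ (Multiset.mem_cons_self ρ s)
    have hs' : ∀ ρ' ∈ s, ‖ρ'‖ ≠ Rr := fun ρ' h => hs ρ' (Multiset.mem_cons_of_mem h)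
    set q : Polynomial ℂ := C a * (s.map (fun ρ => X - C ρ)).prod with hq
    have hfac : C a * ((ρ ::ₘ s).map (fun ρ => X - C ρ)).prod = (X - C ρ) * q := by
      rw [Multiset.map_cons, Multiset.prod_cons, hq]; ring
    have hqz : ∀ z ∈ sphere (0:ℂ) Rr, eval z q ≠ 0 := by
      intro z hz
      rw [mem_sphere_zero_iff_norm] at hz
      rw [hq, eval_mul, eval_C, eval_prodXsub]
      refine mul_ne_zero ha (Multiset.prod_ne_zero ?_)
      intro h0
      rw [Multiset.mem_map] at h0
      obtain ⟨ρ', hρ', hzρ⟩ := h0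
      have : z = ρ' := sub_eq_zero.mp hzρ
      exact hs' ρ' hρ' (by rw [← this, hz])
    have hzρne : ∀ z ∈ sphere (0:ℂ) Rr, z - ρ ≠ 0 := by
      intro z hz
      rw [mem_sphere_zero_iff_norm] at hz
      intro h0
      exact hρ (by rw [← sub_eq_zero.mp h0, hz])
    have heq : Set.EqOn (fun z => eval z (derivative ((X - C ρ) * q)) / eval z ((X - C ρ) * q))
        (fun z => (z - ρ)⁻¹ + eval z (derivative q) / eval z q) (sphere (0:ℂ) Rr) := by
      intro z hz
      have h1 := hzρne z hz
      have h2 := hqz z hz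
      simp only [derivative_mul, derivative_sub, derivative_X, derivative_C, sub_zero, one_mul,
        eval_add, eval_mul, eval_sub, eval_X, eval_C]
      field_simp
    have hint1 : CircleIntegrable (fun z => (z - ρ)⁻¹) 0 Rr := by
      apply ContinuousOn.circleIntegrable hR.le
      exact ((continuousOn_id.sub continuousOn_const).inv₀ (fun z hz => hzρne z hz))
    have hint2 : CircleIntegrable (fun z => eval z (derivative q) / eval z q) 0 Rr := by
      apply ContinuousOn.circleIntegrable hR.le
      exact ((Polynomial.continuous _).continuousOn.div
        (Polynomial.continuous _).continuousOn hqz)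
    rw [hfac, circleIntegral.integral_congr hR.le heq, my_circle_add hint1 hint2, ih hs']
    by_cases hlt : ‖ρ‖ < Rr
    · rw [circleIntegral.integral_sub_inv_of_mem_ball (by
        rw [mem_ball_zero_iff]; exact hlt)]
      rw [Multiset.filter_cons_of_pos (p := fun ρ => ‖ρ‖ < Rr) s hlt, Multiset.card_cons]
      push_cast
      ring
    · have hgt : Rr < ‖ρ‖ := lt_of_le_of_ne (not_lt.mp hlt) (Ne.symm hρ)
      have hzero : (∮ z in C(0, Rr), (z - ρ)⁻¹) = 0 := by
        apply Complex.circleIntegral_eq_zero_of_differentiable_on_off_countable hR.le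
          Set.countable_empty
        · intro z hz
          rw [mem_closedBall_zero_iff] at hz
          have : z - ρ ≠ 0 := by
            intro h0
            rw [sub_eq_zero.mp h0] at hz
            linarith
          exact ((continuousAt_id.sub continuousAt_const).inv₀ this).continuousWithinAt
        · intro z hz
          have hz' : ‖z‖ < Rr := by simpa using hz.1
          have : z - ρ ≠ 0 := by
            intro h0
            rw [sub_eq_zero.mp h0] at hz'
            linarith
          exact ((differentiableAt_id.sub_const ρ).inv this)
      rw [hzero, Multiset.filter_cons_of_neg (p := fun ρ => ‖ρ‖ < Rr) s hlt]
      ring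

lemma circle_count_poly (Rr : ℝ) (hR : 0 < Rr) (p : Polynomial ℂ) (hp : p ≠ 0)
    (hroots : ∀ z : ℂ, p.eval z = 0 → ‖z‖ ≠ Rr) :
    (∮ z in C(0, Rr), eval z (derivative p) / eval z p)
      = 2 * Real.pi * Complex.I *
          (Multiset.card (p.roots.filter (fun ρ => ‖ρ‖ < Rr)) : ℂ) := by
  classical
  have hfac := (IsAlgClosed.splits p).eq_prod_roots
  have hlc : p.leadingCoeff ≠ 0 := leadingCoeff_ne_zero.mpr hp
  have hrs : ∀ ρ ∈ p.roots, ‖ρ‖ ≠ Rr := by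
    intro ρ hρ
    exact hroots ρ ((mem_roots hp).mp hρ)
  calc (∮ z in C(0, Rr), eval z (derivative p) / eval z p)
      = ∮ z in C(0, Rr),
          eval z (derivative (C p.leadingCoeff * (p.roots.map (fun a => X - C a)).prod))
          / eval z (C p.leadingCoeff * (p.roots.map (fun a => X - C a)).prod) := by
        rw [← hfac]
    _ = _ := circle_count Rr hR _ hlc _ hrs

lemma specNorm_add_le {d : ℕ} (M N : Matrix (Fin d) (Fin d) ℂ) :
    specNorm (M + N) ≤ specNorm M + specNorm N := by
  rw [specNorm, specNorm, specNorm, map_add]; exact norm_add_le _ _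

lemma specNorm_sum_le {d : ℕ} {ι : Type*} (s : Finset ι) (f : ι → Matrix (Fin d) (Fin d) ℂ) :
    specNorm (∑ i ∈ s, f i) ≤ ∑ i ∈ s, specNorm (f i) := by
  rw [specNorm, map_sum]
  exact norm_sum_le _ _

lemma specNorm_pos {d : ℕ} {M : Matrix (Fin d) (Fin d) ℂ} (h : M ≠ 0) : 0 < specNorm M := by
  rcases lt_or_eq_of_le (specNorm_nonneg M) with h' | h'
  · exact h'
  · exact absurd (specNorm_eq_zero h'.symm) h

lemma isUnit_key {d : ℕ} (n k : ℕ) (A : ℕ → Matrix (Fin d) (Fin d) ℂ)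
    (hd : 0 < d) (hAk : IsUnit (A k)) (t z : ℂ) (ht : ‖t‖ ≤ 1) (hz : z ≠ 0)
    (hneg : ‖z‖ ^ n + ∑ j ∈ (Finset.range n).erase k, specNorm (A j) * ‖z‖ ^ j
           < (specNorm ((A k)⁻¹))⁻¹ * ‖z‖ ^ k) :
    IsUnit ((z^n) • (1 : Matrix (Fin d) (Fin d) ℂ) + (z^k) • A k
      + t • ∑ j ∈ (Finset.range n).erase k, (z^j) • A j) := by
  have hdet : IsUnit (A k).det := (Matrix.isUnit_iff_isUnit_det _).mp hAk
  set W := (A k)⁻¹ with hWdef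
  have haw : A k * W = 1 := Matrix.mul_nonsing_inv _ hdet
  have hwa : W * A k = 1 := Matrix.nonsing_inv_mul _ hdet
  have hW0 : W ≠ 0 := by
    intro h0
    have h1 : (1 : Matrix (Fin d) (Fin d) ℂ) = 0 := by rw [← hwa, h0, zero_mul]
    have h2 := congrArg Matrix.det h1
    rw [Matrix.det_one, @Matrix.det_zero _ _ _ _ _ ⟨⟨0, hd⟩⟩] at h2
    exact one_ne_zero h2
  have hs : 0 < specNorm W := specNorm_pos hW0
  have hza : 0 < ‖z‖ := by
    simpa using norm_pos_iff.mpr hz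
  have hzk : (0:ℝ) < ‖z‖ ^ k := by positivity
  set Rm := (z^n) • (1 : Matrix (Fin d) (Fin d) ℂ)
      + t • ∑ j ∈ (Finset.range n).erase k, (z^j) • A j with hRmdef
  have hRm : specNorm Rm ≤ ‖z‖ ^ n
      + ∑ j ∈ (Finset.range n).erase k, specNorm (A j) * ‖z‖ ^ j := by
    refine le_trans (specNorm_add_le _ _) (add_le_add ?_ ?_)
    · rw [specNorm_smul, norm_pow]
      calc ‖z‖ ^ n * specNorm 1 ≤ ‖z‖ ^ n * 1 := by
            exact mul_le_mul_of_nonneg_left specNorm_one_le (by positivity)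
        _ = ‖z‖ ^ n := mul_one _
    · rw [specNorm_smul]
      calc ‖t‖ * specNorm (∑ j ∈ (Finset.range n).erase k, (z^j) • A j)
          ≤ 1 * ∑ j ∈ (Finset.range n).erase k, specNorm ((z^j) • A j) := by
            refine mul_le_mul ht (specNorm_sum_le _ _) (specNorm_nonneg _) zero_le_one
        _ = ∑ j ∈ (Finset.range n).erase k, specNorm (A j) * ‖z‖ ^ j := by
            rw [one_mul]
            exact Finset.sum_congr rfl fun j _ => by rw [specNorm_smul, norm_pow, mul_comm]
  set B := ((z^k)⁻¹) • (W * Rm) with hBdef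
  have hBnorm : specNorm B < 1 := by
    have h1 : specNorm B ≤ (‖z‖ ^ k)⁻¹ * (specNorm W * specNorm Rm) := by
      rw [hBdef, specNorm_smul, norm_inv, norm_pow]
      exact mul_le_mul_of_nonneg_left (specNorm_mul_le _ _) (by positivity)
    have h2 : specNorm W * specNorm Rm < ‖z‖ ^ k := by
      calc specNorm W * specNorm Rm
          ≤ specNorm W * (‖z‖ ^ n
            + ∑ j ∈ (Finset.range n).erase k, specNorm (A j) * ‖z‖ ^ j) :=
            mul_le_mul_of_nonneg_left hRm hs.le
        _ < specNorm W * ((specNorm W)⁻¹ * ‖z‖ ^ k) :=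
            (mul_lt_mul_iff_right₀ hs).mpr hneg
        _ = ‖z‖ ^ k := by field_simp
    calc specNorm B ≤ (‖z‖ ^ k)⁻¹ * (specNorm W * specNorm Rm) := h1
      _ < (‖z‖ ^ k)⁻¹ * ‖z‖ ^ k := by
          exact (mul_lt_mul_iff_right₀ (inv_pos.mpr hzk)).mpr h2
      _ = 1 := inv_mul_cancel₀ hzk.ne'
  have hfac : (z^n) • (1 : Matrix (Fin d) (Fin d) ℂ) + (z^k) • A k
      + t • ∑ j ∈ (Finset.range n).erase k, (z^j) • A j
      = ((z^k) • A k) * (1 + B) := by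
    rw [mul_add, mul_one, hBdef]
    have hB : ((z^k) • A k) * (((z^k)⁻¹) • (W * Rm)) = Rm := by
      rw [Matrix.smul_mul, Matrix.mul_smul, smul_smul, ← mul_assoc (A k), haw, one_mul,
        mul_inv_cancel₀ (pow_ne_zero _ hz), one_smul]
    rw [hB, hRmdef]
    abel
  rw [hfac]
  have hu1 : IsUnit ((z^k) • A k) := by
    rw [Matrix.isUnit_iff_isUnit_det, Matrix.det_smul, Fintype.card_fin]
    exact (isUnit_iff_ne_zero.mpr (pow_ne_zero _ (pow_ne_zero _ hz))).mul hdet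
  exact hu1.mul (isUnit_one_add_of_specNorm_lt hBnorm)

lemma isUnit_key0 {d : ℕ} (k : ℕ) (A : ℕ → Matrix (Fin d) (Fin d) ℂ)
    (hAk : IsUnit (A k)) (w : ℂ)
    (hw : ‖w‖ * specNorm ((A k)⁻¹) < 1) :
    IsUnit (w • (1 : Matrix (Fin d) (Fin d) ℂ) + A k) := by
  have hdet : IsUnit (A k).det := (Matrix.isUnit_iff_isUnit_det _).mp hAk
  set W := (A k)⁻¹ with hWdef
  have haw : A k * W = 1 := Matrix.mul_nonsing_inv _ hdet
  have hfac : w • (1 : Matrix (Fin d) (Fin d) ℂ) + A k = A k * (1 + w • W) := by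
    rw [mul_add, mul_one, Matrix.mul_smul, haw]
    abel
  rw [hfac]
  refine hAk.mul (isUnit_one_add_of_specNorm_lt ?_)
  rw [specNorm_smul]
  exact hw
variable (d n k : ℕ) (A : ℕ → Matrix (Fin d) (Fin d) ℂ)

noncomputable def ptP (t : ℂ) : Polynomial ℂ :=
  Matrix.det ((X:ℂ[X])^n • 1 + (X:ℂ[X])^k • (A k).map C
    + t • ∑ j ∈ (Finset.range n).erase k, (X:ℂ[X])^j • (A j).map C)

lemma eval_ptP (z t : ℂ) : eval z (ptP d n k A t) =
    Matrix.det ((z^n) • (1 : Matrix (Fin d) (Fin d) ℂ) + (z^k) • A k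
      + t • ∑ j ∈ (Finset.range n).erase k, (z^j) • A j) := by
  rw [ptP, ← coe_evalRingHom, RingHom.map_det]
  refine congrArg _ (Matrix.ext fun i j => ?_)
  simp [Matrix.map_apply, Matrix.add_apply, Matrix.smul_apply, Matrix.sum_apply,
    Matrix.one_apply, smul_eq_C_mul, apply_ite, eval_finset_sum]
  ring_nf

noncomputable def ptDD : Polynomial (Polynomial ℂ) :=
  Matrix.det ((((X:ℂ[X])^n • 1 + (X:ℂ[X])^k • (A k).map C : Matrix (Fin d) (Fin d) ℂ[X])).map C
    + (X : Polynomial (ℂ[X])) •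
      ((∑ j ∈ (Finset.range n).erase k, (X:ℂ[X])^j • (A j).map C : Matrix (Fin d) (Fin d) ℂ[X])).map C)

lemma ptP_eq_eval_DD (t : ℂ) : ptP d n k A t = (ptDD d n k A).eval (C t) := by
  rw [ptDD, ← coe_evalRingHom, RingHom.map_det, ptP]
  refine congrArg _ (Matrix.ext fun i j => ?_)
  simp [Matrix.map_apply, Matrix.add_apply, Matrix.smul_apply, Matrix.sum_apply,
    smul_eq_C_mul, eval_finset_sum]

lemma ptP_sum (t : ℂ) : ptP d n k A t =
    ∑ i ∈ Finset.range ((ptDD d n k A).natDegree + 1),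
      (ptDD d n k A).coeff i * C (t^i) := by
  rw [ptP_eq_eval_DD, eval_eq_sum_range]
  congr 1
  funext i
  rw [map_pow]

lemma deriv_ptP (t : ℂ) : derivative (ptP d n k A t) =
    ∑ i ∈ Finset.range ((ptDD d n k A).natDegree + 1),
      derivative ((ptDD d n k A).coeff i) * C (t^i) := by
  rw [ptP_sum, map_sum]
  congr 1
  funext i
  rw [derivative_mul, derivative_C, mul_zero, add_zero]

lemma cont_G : Continuous (fun p : ℂ × ℂ => eval p.2 (ptP d n k A p.1)) := by
  have h : (fun p : ℂ × ℂ => eval p.2 (ptP d n k A p.1)) =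
      fun p => ∑ i ∈ Finset.range ((ptDD d n k A).natDegree + 1),
        eval p.2 ((ptDD d n k A).coeff i) * p.1^i := by
    funext p
    rw [ptP_sum]
    simp [eval_finset_sum]
  rw [h]
  apply continuous_finset_sum
  intro i _
  exact ((Polynomial.continuous _).comp continuous_snd).mul (continuous_fst.pow i)

lemma cont_H : Continuous (fun p : ℂ × ℂ => eval p.2 (derivative (ptP d n k A p.1))) := by
  have h : (fun p : ℂ × ℂ => eval p.2 (derivative (ptP d n k A p.1))) =
      fun p => ∑ i ∈ Finset.range ((ptDD d n k A).natDegree + 1),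
        eval p.2 (derivative ((ptDD d n k A).coeff i)) * p.1^i := by
    funext p
    rw [deriv_ptP]
    simp [eval_finset_sum]
  rw [h]
  apply continuous_finset_sum
  intro i _
  exact ((Polynomial.continuous _).comp continuous_snd).mul (continuous_fst.pow i)

lemma ptP_zero (hkn : k ≤ n) : ptP d n k A 0 =
    X^(k*d) * Matrix.det ((X:ℂ[X])^(n-k) • (1 : Matrix (Fin d) (Fin d) ℂ[X]) + (A k).map C) := by
  rw [ptP, zero_smul, add_zero]
  have h : (X:ℂ[X])^n • (1 : Matrix (Fin d) (Fin d) ℂ[X]) + (X:ℂ[X])^k • (A k).map C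
      = (X:ℂ[X])^k • ((X:ℂ[X])^(n-k) • (1 : Matrix (Fin d) (Fin d) ℂ[X]) + (A k).map C) := by
    rw [smul_add, smul_smul, ← pow_add]
    congr 3
    omega
  rw [h, Matrix.det_smul, Fintype.card_fin, ← pow_mul]

lemma eval_detXm {d : ℕ} (m : ℕ) (M : Matrix (Fin d) (Fin d) ℂ) (z : ℂ) :
    eval z (Matrix.det ((X:ℂ[X])^m • (1 : Matrix (Fin d) (Fin d) ℂ[X]) + M.map C))
      = Matrix.det ((z^m) • (1 : Matrix (Fin d) (Fin d) ℂ) + M) := by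
  rw [← coe_evalRingHom, RingHom.map_det]
  refine congrArg _ (Matrix.ext fun i j => ?_)
  simp [Matrix.map_apply, Matrix.add_apply, Matrix.smul_apply, Matrix.one_apply, apply_ite]

lemma sPos {d : ℕ} (hd : 0 < d) {k : ℕ} {A : ℕ → Matrix (Fin d) (Fin d) ℂ}
    (hAk : IsUnit (A k)) : 0 < specNorm ((A k)⁻¹) := by
  have hdet : IsUnit (A k).det := (Matrix.isUnit_iff_isUnit_det _).mp hAk
  have hwa : (A k)⁻¹ * A k = 1 := Matrix.nonsing_inv_mul _ hdet
  refine specNorm_pos ?_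
  intro h0
  have h1 : (1 : Matrix (Fin d) (Fin d) ℂ) = 0 := by rw [← hwa, h0, zero_mul]
  have h2 := congrArg Matrix.det h1
  rw [Matrix.det_one, @Matrix.det_zero _ _ _ _ _ ⟨⟨0, hd⟩⟩] at h2
  exact one_ne_zero h2

theorem pellet_matrix
    (d n : ℕ) (hn : 2 ≤ n) (A : ℕ → Matrix (Fin d) (Fin d) ℂ) (hA0 : A 0 ≠ 0)
    (k : ℕ) (hk1 : 1 ≤ k) (hk2 : k ≤ n - 1) (hAk : IsUnit (A k))
    (f : ℝ → ℝ)
    (hf : ∀ x : ℝ, f x = x ^ n - (specNorm ((A k)⁻¹))⁻¹ * x ^ k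
        + ∑ j ∈ (Finset.range n).erase k, specNorm (A j) * x ^ j)
    (x1 x2 : ℝ) (hx1 : 0 < x1) (hx12 : x1 < x2) (hfx1 : f x1 = 0) (hfx2 : f x2 = 0)
    (Q : Polynomial ℂ)
    (hQ : ∀ z : ℂ, Q.eval z = Matrix.det (z ^ n • (1 : Matrix (Fin d) (Fin d) ℂ)
        + ∑ j ∈ Finset.range n, z ^ j • A j)) :
    rcount Q (fun z => ‖z‖ ≤ x1) = k * d ∧
    ∀ z : ℂ, Q.eval z = 0 → ¬ (x1 < ‖z‖ ∧ ‖z‖ < x2) := by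
  classical
  have hd : 0 < d := by
    rcases Nat.eq_zero_or_pos d with hd0 | hd0
    · exfalso
      apply hA0
      subst hd0
      ext i j
      exact absurd i.2 (Nat.not_lt_zero _)
    · exact hd0
  have hkn : k + 1 ≤ n := by omega
  have hnk0 : n - k ≠ 0 := by omega
  have hx2 : 0 < x2 := lt_trans hx1 hx12
  have hs : 0 < specNorm ((A k)⁻¹) := sPos hd hAk
  have hfx1' : x1^n - (specNorm ((A k)⁻¹))⁻¹*x1^k
      + ∑ j ∈ (Finset.range n).erase k, specNorm (A j) * x1^j = 0 := by
    rw [← hf x1]; exact hfx1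
  have hfx2' : x2^n - (specNorm ((A k)⁻¹))⁻¹*x2^k
      + ∑ j ∈ (Finset.range n).erase k, specNorm (A j) * x2^j = 0 := by
    rw [← hf x2]; exact hfx2
  have hfneg : ∀ x : ℝ, x1 < x → x < x2 →
      x^n - (specNorm ((A k)⁻¹))⁻¹*x^k
        + ∑ j ∈ (Finset.range n).erase k, specNorm (A j) * x^j < 0 :=
    fun x hxa hxb => fneg n k hkn _ (fun j => specNorm (A j)) (fun j => specNorm_nonneg _)
      x1 x2 hx1 hx12 hfx1' hfx2' hxa hxb
  have annulus : ∀ t : ℂ, ‖t‖ ≤ 1 → ∀ z : ℂ,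
      x1 < ‖z‖ → ‖z‖ < x2 → eval z (ptP d n k A t) ≠ 0 := by
    intro t ht z hza hzb
    rw [eval_ptP]
    have hz0 : z ≠ 0 := by
      intro h
      rw [h] at hza
      simp at hza
      linarith
    have hneg := hfneg (‖z‖) hza hzb
    have hu := isUnit_key n k A hd hAk t z ht hz0 (by linarith)
    exact ((Matrix.isUnit_iff_isUnit_det _).mp hu).ne_zero
  have hkr : k ∈ Finset.range n := Finset.mem_range.mpr (by omega)
  have hQeq : Q = ptP d n k A 1 := by
    apply Polynomial.funext
    intro z
    rw [hQ z, eval_ptP, one_smul]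
    congr 1
    rw [add_assoc]
    congr 1
    exact (Finset.add_sum_erase _ _ hkr).symm
  have part2 : ∀ z : ℂ, Q.eval z = 0 → ¬ (x1 < ‖z‖ ∧ ‖z‖ < x2) := by
    rintro z hz ⟨h1, h2⟩
    exact annulus 1 (by simp) z h1 h2 (by rw [← hQeq]; exact hz)
  refine ⟨?_, part2⟩
  set r : ℝ := (x1 + x2)/2 with hrdef
  have hx1r : x1 < r := by rw [hrdef]; linarith
  have hrx2 : r < x2 := by rw [hrdef]; linarith
  have hr0 : 0 < r := lt_trans hx1 hx1r
  have habs_r : ‖(r:ℂ)‖ = r := by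
    rw [Complex.norm_real, Real.norm_eq_abs, abs_of_pos hr0]
  set cn : ℝ → ℕ := fun u =>
    Multiset.card ((ptP d n k A ((u:ℝ):ℂ)).roots.filter (fun ρ => ‖ρ‖ < r)) with hcndef
  have habs_u : ∀ u : ℝ, u ∈ Set.Icc (0:ℝ) 1 → ‖((u:ℝ):ℂ)‖ ≤ 1 := by
    intro u hu
    rw [Complex.norm_real, Real.norm_eq_abs, abs_le]
    exact ⟨by linarith [hu.1], hu.2⟩
  have hptne : ∀ u : ℝ, u ∈ Set.Icc (0:ℝ) 1 → ptP d n k A ((u:ℝ):ℂ) ≠ 0 := by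
    intro u hu h0
    have := annulus ((u:ℝ):ℂ) (habs_u u hu) ((r:ℂ))
      (by rw [habs_r]; exact hx1r) (by rw [habs_r]; exact hrx2)
    rw [h0] at this
    simp at this
  have hcirc : ∀ u : ℝ, u ∈ Set.Icc (0:ℝ) 1 →
      (∮ z in C(0, r), eval z (derivative (ptP d n k A ((u:ℝ):ℂ)))
          / eval z (ptP d n k A ((u:ℝ):ℂ)))
        = 2 * Real.pi * Complex.I * (cn u : ℂ) := by
    intro u hu
    refine circle_count_poly r hr0 _ (hptne u hu) ?_
    intro z hz0 habs
    exact annulus ((u:ℝ):ℂ) (habs_u u hu) z (by rw [habs]; exact hx1r)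
      (by rw [habs]; exact hrx2) hz0
  haveI : PreconnectedSpace (Set.Icc (0:ℝ) 1) := Subtype.preconnectedSpace isPreconnected_Icc
  have hFcont : Continuous (Function.uncurry (fun (u : Set.Icc (0:ℝ) 1) (θ : ℝ) =>
      deriv (circleMap 0 r) θ •
        (eval (circleMap 0 r θ) (derivative (ptP d n k A (((u:ℝ):ℂ))))
          / eval (circleMap 0 r θ) (ptP d n k A (((u:ℝ):ℂ)))))) := by
    apply Continuous.fun_smul
    · have : Continuous (fun p : Set.Icc (0:ℝ) 1 × ℝ => deriv (circleMap 0 r) p.2) := by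
        simp only [deriv_circleMap]
        exact ((continuous_circleMap 0 r).comp continuous_snd).mul continuous_const
      exact this
    · apply Continuous.div
      · exact (cont_H d n k A).comp
          ((Complex.continuous_ofReal.comp (continuous_subtype_val.comp continuous_fst)).prodMk
            ((continuous_circleMap 0 r).comp continuous_snd))
      · exact (cont_G d n k A).comp
          ((Complex.continuous_ofReal.comp (continuous_subtype_val.comp continuous_fst)).prodMk
            ((continuous_circleMap 0 r).comp continuous_snd))
      · rintro ⟨u, θ⟩
        have hzabs : ‖circleMap 0 r θ‖ = r := by
          have := circleMap_mem_sphere (0:ℂ) hr0.le θ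
          rw [mem_sphere_zero_iff_norm] at this
          rw [this]
        exact annulus ((u:ℝ):ℂ) (habs_u u u.2) _ (by rw [hzabs]; exact hx1r)
          (by rw [hzabs]; exact hrx2)
  have hIcont : Continuous (fun u : Set.Icc (0:ℝ) 1 =>
      ∮ z in C(0, r), eval z (derivative (ptP d n k A (((u:ℝ):ℂ))))
        / eval z (ptP d n k A (((u:ℝ):ℂ)))) := by
    exact intervalIntegral.continuous_parametric_intervalIntegral_of_continuous'
      hFcont 0 (2*Real.pi)
  have hcn_lc : IsLocallyConstant (fun u : Set.Icc (0:ℝ) 1 => cn (u:ℝ)) := by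
    rw [IsLocallyConstant.iff_eventually_eq]
    intro u
    obtain ⟨δ, hδ, hball⟩ := Metric.continuousAt_iff.mp (hIcont.continuousAt (x := u))
      Real.pi Real.pi_pos
    refine Filter.eventually_iff_exists_mem.mpr
      ⟨Metric.ball u δ, Metric.ball_mem_nhds u hδ, fun v hv => ?_⟩
    by_contra hne
    have hIv := hcirc (v:ℝ) v.2
    have hIu := hcirc (u:ℝ) u.2
    have hdist := hball (Metric.mem_ball.mp hv)
    rw [Complex.dist_eq, hIv, hIu, ← mul_sub] at hdist
    have habs2pi : ‖2 * (Real.pi:ℂ) * Complex.I‖ = 2 * Real.pi := by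
      simp [abs_of_pos Real.pi_pos]
    rw [norm_mul, habs2pi] at hdist
    have hint : (1:ℝ) ≤ ‖(cn (v:ℝ) : ℂ) - (cn (u:ℝ) : ℂ)‖ := by
      have hcast : ((cn (v:ℝ) : ℂ) - (cn (u:ℝ) : ℂ))
          = (((cn (v:ℝ) : ℤ) - (cn (u:ℝ) : ℤ) : ℤ) : ℂ) := by push_cast; ring
      rw [hcast, Complex.norm_intCast, ← Int.cast_abs]
      have hz0 : ((cn (v:ℝ) : ℤ) - (cn (u:ℝ) : ℤ)) ≠ 0 := by
        intro h0
        exact hne (by exact_mod_cast sub_eq_zero.mp h0)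
      exact_mod_cast Int.one_le_abs hz0
    nlinarith [Real.pi_pos]
  have hconst : cn 1 = cn 0 := by
    have := hcn_lc.apply_eq_of_preconnectedSpace
      (⟨1, by constructor <;> norm_num⟩ : Set.Icc (0:ℝ) 1)
      (⟨0, by constructor <;> norm_num⟩ : Set.Icc (0:ℝ) 1)
    simpa using this
  -- compute cn 0
  have hdetAk : IsUnit (A k).det := (Matrix.isUnit_iff_isUnit_det _).mp hAk
  have hc2 : x2^(n-k) ≤ (specNorm ((A k)⁻¹))⁻¹ := by
    have hsum : (0:ℝ) ≤ ∑ j ∈ (Finset.range n).erase k, specNorm (A j) * x2^j :=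
      Finset.sum_nonneg fun j _ => mul_nonneg (specNorm_nonneg _) (by positivity)
    have hxx : x2^n = x2^k * x2^(n-k) := by
      rw [← pow_add]
      congr 1
      omega
    nlinarith [pow_pos hx2 k, pow_pos hx2 (n-k)]
  set gp : Polynomial ℂ :=
    Matrix.det ((X:ℂ[X])^(n-k) • (1 : Matrix (Fin d) (Fin d) ℂ[X]) + (A k).map C) with hgpdef
  have hgroots : ∀ z ∈ gp.roots, x2 ≤ ‖z‖ := by
    intro z hz
    by_contra hlt
    push_neg at hlt
    have hev : eval z gp = 0 := by
      have := (mem_roots'.mp hz).2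
      exact this
    rw [hgpdef, eval_detXm] at hev
    have hwlt : ‖z^(n-k)‖ * specNorm ((A k)⁻¹) < 1 := by
      rw [norm_pow]
      have h1 : ‖z‖ ^ (n-k) < x2^(n-k) :=
        pow_lt_pow_left₀ hlt (norm_nonneg z) hnk0
      have h2 : ‖z‖ ^ (n-k) < (specNorm ((A k)⁻¹))⁻¹ := lt_of_lt_of_le h1 hc2
      calc ‖z‖ ^ (n-k) * specNorm ((A k)⁻¹)
          < (specNorm ((A k)⁻¹))⁻¹ * specNorm ((A k)⁻¹) := by
            exact (mul_lt_mul_iff_left₀ hs).mpr h2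
        _ = 1 := inv_mul_cancel₀ hs.ne'
    have hu := isUnit_key0 k A hAk (z^(n-k)) hwlt
    exact ((Matrix.isUnit_iff_isUnit_det _).mp hu).ne_zero hev
  have hgne : gp ≠ 0 := by
    intro h0
    have hev := eval_detXm (d := d) (n-k) (A k) 0
    rw [← hgpdef, h0] at hev
    rw [zero_pow hnk0, zero_smul, zero_add] at hev
    simp only [eval_zero] at hev
    exact hdetAk.ne_zero hev.symm
  have hcn0 : cn 0 = k * d := by
    have hsplit0 : ptP d n k A 0 = X^(k*d) * gp := ptP_zero d n k A (by omega)
    rw [hcndef]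
    simp only [Complex.ofReal_zero]
    rw [hsplit0, Polynomial.roots_mul (mul_ne_zero (pow_ne_zero _ X_ne_zero) hgne),
      roots_pow, roots_X, Multiset.filter_add, Multiset.card_add]
    have h1 : Multiset.filter (fun ρ => ‖ρ‖ < r) ((k*d) • ({0} : Multiset ℂ))
        = (k*d) • ({0} : Multiset ℂ) := by
      refine Multiset.filter_eq_self.mpr ?_
      intro a ha
      rw [Multiset.nsmul_singleton, Multiset.mem_replicate] at ha
      rw [ha.2]
      simpa using hr0
    have h2 : Multiset.filter (fun ρ => ‖ρ‖ < r) gp.roots = 0 := by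
      refine Multiset.filter_eq_nil.mpr ?_
      intro a ha
      exact not_lt.mpr (le_trans hrx2.le (hgroots a ha))
    rw [h1, h2, Multiset.nsmul_singleton, Multiset.card_replicate]
    simp
  -- conclude
  have hone : ((1:ℝ):ℂ) = (1:ℂ) := by norm_num
  have hfilter : Multiset.filter (fun z => ‖z‖ ≤ x1) (ptP d n k A 1).roots
      = Multiset.filter (fun ρ => ‖ρ‖ < r) (ptP d n k A 1).roots := by
    refine Multiset.filter_congr ?_
    intro z hz
    have hz0 : eval z (ptP d n k A 1) = 0 := (mem_roots'.mp hz).2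
    constructor
    · intro h
      exact lt_of_le_of_lt h hx1r
    · intro h
      by_contra hgt
      push_neg at hgt
      exact annulus 1 (by simp) z hgt (lt_trans h hrx2) hz0
  have : rcount Q (fun z => ‖z‖ ≤ x1) = cn 1 := by
    rw [rcount, hQeq, hcndef]
    simp only [hone]
    rw [hfilter]
  rw [this, hconst, hcn0]
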